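/- Finite-time blow up for the comparison ODE: There is no twice differentiable function G : [0,∞) → ℝ satisfying G''(t) = G(t)²/2 for all t ≥ 0 together with G(0) = 1 and G'(0) = 0. Equivalently, any maximal solution of this initial value problem exists only on a bounded interval [0,T*) with T* < ∞ and satisfies G(t) → ∞ as t → T*. -/

import Mathlib

open Set

lemma monoIci {a : ℝ} {f f' : ℝ → ℝ}
    (hf : ∀ t ∈ Ici a, HasDerivWithinAt f (f' t) (Ici a) t)
    (hpos : ∀ t, a < t → 0 ≤ f' t) : MonotoneOn f (Ici a) := by
  apply monotoneOn_of_deriv_nonneg (convex_Ici a)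
    (fun t ht => (hf t ht).continuousWithinAt)
  · intro t ht
    rw [interior_Ici] at ht
    exact ((hf t (mem_Ici.mpr (le_of_lt ht))).hasDerivAt (Ici_mem_nhds ht)).differentiableAt.differentiableWithinAt
  · intro t ht
    rw [interior_Ici] at ht
    rw [((hf t (mem_Ici.mpr (le_of_lt ht))).hasDerivAt (Ici_mem_nhds ht)).deriv]
    exact hpos t ht

lemma antiIci {a : ℝ} {f f' : ℝ → ℝ}
    (hf : ∀ t ∈ Ici a, HasDerivWithinAt f (f' t) (Ici a) t)
    (hneg : ∀ t, a < t → f' t ≤ 0) : AntitoneOn f (Ici a) := by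
  apply antitoneOn_of_deriv_nonpos (convex_Ici a)
    (fun t ht => (hf t ht).continuousWithinAt)
  · intro t ht
    rw [interior_Ici] at ht
    exact ((hf t (mem_Ici.mpr (le_of_lt ht))).hasDerivAt (Ici_mem_nhds ht)).differentiableAt.differentiableWithinAt
  · intro t ht
    rw [interior_Ici] at ht
    rw [((hf t (mem_Ici.mpr (le_of_lt ht))).hasDerivAt (Ici_mem_nhds ht)).deriv]
    exact hneg t ht

/-- **Finite time blow up for the comparison ODE.** There is no twice differentiable
`G : [0,∞) → ℝ` with `G'' = G²/2`, `G(0) = 1`, `G'(0) = 0`. -/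
theorem comparison_ode_blowup :
    ¬ ∃ G G' : ℝ → ℝ,
      (∀ t, 0 ≤ t →
        HasDerivWithinAt G (G' t) (Set.Ici 0) t ∧
        HasDerivWithinAt G' (G t ^ 2 / 2) (Set.Ici 0) t) ∧
      G 0 = 1 ∧ G' 0 = 0 := by
  rintro ⟨G, g, hd, h0, h0'⟩
  have hG : ∀ t ∈ Ici (0:ℝ), HasDerivWithinAt G (g t) (Ici 0) t := fun t ht => (hd t ht).1
  have hg : ∀ t ∈ Ici (0:ℝ), HasDerivWithinAt g (G t ^ 2 / 2) (Ici 0) t := fun t ht => (hd t ht).2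
  -- g is monotone, hence g ≥ 0
  have hgmono : MonotoneOn g (Ici 0) := monoIci hg (fun t _ => by positivity)
  have hgpos : ∀ t, 0 ≤ t → 0 ≤ g t := fun t ht => by
    have := hgmono (self_mem_Ici) ht ht; rw [h0'] at this; exact this
  -- G is monotone, hence G ≥ 1
  have hGmono : MonotoneOn G (Ici 0) := monoIci hG (fun t ht => hgpos t ht.le)
  have hG1 : ∀ t, 0 ≤ t → 1 ≤ G t := fun t ht => by
    have := hGmono (self_mem_Ici) ht ht; rw [h0] at this; exact this
  -- g t ≥ t/2
  have hghalf : ∀ t, 0 ≤ t → t / 2 ≤ g t := by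
    intro t ht
    have hmono : MonotoneOn (fun t => g t - t / 2) (Ici 0) := by
      apply monoIci (f' := fun t => G t ^ 2 / 2 - 1 / 2)
      · intro s hs
        exact (hg s hs).sub ((hasDerivWithinAt_id s _).div_const 2)
      · intro s hs
        have := hG1 s hs.le
        nlinarith
    have := hmono (self_mem_Ici) ht ht
    simp only [h0'] at this
    linarith
  -- G t ≥ 1 + t^2/4
  have hGquad : ∀ t, 0 ≤ t → 1 + t ^ 2 / 4 ≤ G t := by
    intro t ht
    have hmono : MonotoneOn (fun t => G t - t ^ 2 / 4) (Ici 0) := by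
      apply monoIci (f' := fun t => g t - t / 2)
      · intro s hs
        have : HasDerivWithinAt (fun t : ℝ => t ^ 2 / 4) (2 * s ^ 1 / 4) (Ici 0) s :=
          ((hasDerivWithinAt_pow 2 s).div_const 4)
        have := (hG s hs).sub this
        exact this.congr_deriv (by ring)
      · intro s hs
        have := hghalf s hs.le
        linarith
    have := hmono (self_mem_Ici) ht ht
    simp only [h0] at this
    linarith
  -- G t ≥ 2 for t ≥ 2
  have hG2 : ∀ t, 2 ≤ t → 2 ≤ G t := by
    intro t ht
    have h02 : (2:ℝ) ∈ Ici (0:ℝ) := by norm_num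
    have := hGmono h02 (by linarith : (0:ℝ) ≤ t) ht
    have h2 := hGquad 2 (by norm_num)
    nlinarith
  -- energy conservation : g t ^ 2 - G t ^3 / 3 = -1/3
  have hEnergy : ∀ t, 0 ≤ t → g t ^ 2 = (G t ^ 3 - 1) / 3 := by
    have hE : ∀ s ∈ Ici (0:ℝ),
        HasDerivWithinAt (fun t => g t ^ 2 - G t ^ 3 / 3) 0 (Ici 0) s := by
      intro s hs
      have h1 : HasDerivWithinAt (fun t => g t ^ 2) (2 * g s ^ 1 * (G s ^ 2 / 2)) (Ici 0) s :=
        (hg s hs).pow 2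
      have h2 : HasDerivWithinAt (fun t => G t ^ 3 / 3) (3 * G s ^ 2 * g s / 3) (Ici 0) s :=
        ((hG s hs).pow 3).div_const 3
      have := h1.sub h2
      exact this.congr_deriv (by ring)
    intro t ht
    have hm : MonotoneOn (fun t => g t ^ 2 - G t ^ 3 / 3) (Ici 0) :=
      monoIci hE (fun _ _ => le_refl 0)
    have ha : AntitoneOn (fun t => g t ^ 2 - G t ^ 3 / 3) (Ici 0) :=
      antiIci hE (fun _ _ => le_refl 0)
    have h1 := hm (self_mem_Ici) ht ht
    have h2 := ha (self_mem_Ici) ht ht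
    simp only [h0, h0'] at h1 h2
    have : g t ^ 2 - G t ^ 3 / 3 = 0 ^ 2 - 1 ^ 3 / 3 := le_antisymm h2 h1
    nlinarith [this]
  -- for t ≥ 2 : g t ≥ G t * sqrt (G t) / 2
  have hglow : ∀ t, 2 ≤ t → G t * Real.sqrt (G t) / 2 ≤ g t := by
    intro t ht
    have ht0 : (0:ℝ) ≤ t := by linarith
    have hG2t := hG2 t ht
    have hs : Real.sqrt (G t) ^ 2 = G t := Real.sq_sqrt (by linarith)
    have hsnn : 0 ≤ Real.sqrt (G t) := Real.sqrt_nonneg _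
    have hE := hEnergy t ht0
    have hgn := hgpos t ht0
    have hG3 : (8:ℝ) ≤ G t ^ 3 := by
      calc (8:ℝ) = 2 ^ 3 := by norm_num
        _ ≤ G t ^ 3 := pow_le_pow_left₀ (by norm_num) hG2t 3
    have hg2 : G t ^ 3 / 4 ≤ g t ^ 2 := by nlinarith
    have hnn : 0 ≤ G t * Real.sqrt (G t) / 2 := by positivity
    have hsq2 : (G t * Real.sqrt (G t) / 2) ^ 2 = G t ^ 3 / 4 := by
      rw [div_pow, mul_pow, hs]; ring
    calc G t * Real.sqrt (G t) / 2 = Real.sqrt ((G t * Real.sqrt (G t) / 2) ^ 2) :=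
          (Real.sqrt_sq hnn).symm
      _ ≤ Real.sqrt (g t ^ 2) := Real.sqrt_le_sqrt (by linarith)
      _ = g t := Real.sqrt_sq hgn
  -- the function K t = 1/sqrt(G t) + t/4 is antitone on Ici 2
  set H : ℝ → ℝ := fun t => (Real.sqrt (G t))⁻¹ with hHdef
  have hKanti : AntitoneOn (fun t => H t + t / 4) (Ici 2) := by
    apply antiIci (f' := fun t => -(1 / (2 * Real.sqrt (G t)) * g t) / Real.sqrt (G t) ^ 2 + 1 / 4)
    · intro s hs
      have hs0 : (0:ℝ) ≤ s := le_trans (by norm_num) hs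
      have hGs : 0 < G s := by linarith [hG1 s hs0]
      have hsq : HasDerivWithinAt (fun t => Real.sqrt (G t))
          (1 / (2 * Real.sqrt (G s)) * g s) (Ici 0) s :=
        (Real.hasDerivAt_sqrt (ne_of_gt hGs)).comp_hasDerivWithinAt s (hG s hs0)
      have hsqrt_pos : 0 < Real.sqrt (G s) := Real.sqrt_pos.mpr hGs
      have hinv : HasDerivWithinAt H
          (-(1 / (2 * Real.sqrt (G s)) * g s) / Real.sqrt (G s) ^ 2) (Ici 0) s :=
        hsq.inv (ne_of_gt hsqrt_pos)
      have := hinv.add ((hasDerivWithinAt_id s _).div_const 4)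
      exact (this.mono (Ici_subset_Ici.mpr (by norm_num : (0:ℝ) ≤ 2)))
    · intro s hs
      have hs0 : (0:ℝ) ≤ s := by linarith
      have hG2s := hG2 s hs.le
      have hglows := hglow s hs.le
      have hGs : (0:ℝ) < G s := by linarith
      have hsq : Real.sqrt (G s) ^ 2 = G s := Real.sq_sqrt (le_of_lt hGs)
      have hsqrt_pos : 0 < Real.sqrt (G s) := Real.sqrt_pos.mpr hGs
      have hsqrt2 : Real.sqrt 2 ≤ Real.sqrt (G s) := Real.sqrt_le_sqrt hG2s
      rw [div_add' _ _ _ (by positivity), div_nonpos_iff]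
      right
      refine ⟨?_, by positivity⟩
      rw [hsq]
      have h1 : 1 / (2 * Real.sqrt (G s)) * (G s * Real.sqrt (G s) / 2)
          ≤ 1 / (2 * Real.sqrt (G s)) * g s :=
        mul_le_mul_of_nonneg_left hglows (by positivity)
      have h2 : 1 / (2 * Real.sqrt (G s)) * (G s * Real.sqrt (G s) / 2) = G s / 4 := by
        field_simp; ring
      linarith
  -- conclude
  have h2m : (2:ℝ) ∈ Ici (2:ℝ) := self_mem_Ici
  have h8m : (8:ℝ) ∈ Ici (2:ℝ) := by norm_num
  have hK := hKanti h2m h8m (by norm_num)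
  have hH2 : H 2 ≤ 1 := by
    have : (1:ℝ) ≤ Real.sqrt (G 2) := by
      rw [show (1:ℝ) = Real.sqrt 1 from (Real.sqrt_one).symm]
      exact Real.sqrt_le_sqrt (hG1 2 (by norm_num))
    simp only [hHdef]
    rw [inv_le_one_iff₀]
    right; exact this
  have hH8 : 0 ≤ H 8 := by positivity
  simp only [hHdef] at hK hH2 hH8
  linarith
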